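/- arXiv:2112.05515 — 2 statements merged into one kernel-verified Lean document; each statement's English description precedes it below -/
import Mathlib

section
/- Let C be the Moore collection on P(Bunch) generated by principal sets ⟦φ⟧ = {Δ | Δ ⊢cf φ} (closed sets are arbitrary intersections of principal sets). Then every closed set X satisfies: (1) the singleton-leaf bunch ⊥ is in X; (2) if Δ ∈ X then (Δ ; Δ') ∈ X for any bunch Δ'; (3) if (Δ ; Δ) ∈ X then Δ ∈ X; (4) Δ ∈ X iff the formula-collapse bunch ⟨Δ⟩ ∈ X. -/
/-- Formulas of BI. -/
inductive Frml : Type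
  | atom : Nat → Frml
  | top : Frml
  | bot : Frml
  | emp : Frml
  | and : Frml → Frml → Frml
  | or : Frml → Frml → Frml
  | imp : Frml → Frml → Frml
  | sep : Frml → Frml → Frml
  | wand : Frml → Frml → Frml

/-- Bunches: trees with formula leaves, multiplicative/additive units and nodes. -/
inductive Bunch : Type
  | frml : Frml → Bunch
  | mempty : Bunch    -- ∅ₘ
  | aempty : Bunch    -- ∅ₐ
  | comma : Bunch → Bunch → Bunch   -- multiplicative ','
  | semic : Bunch → Bunch → Bunch   -- additive ';'

/-- Bunched contexts: bunches with a single hole. -/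
inductive BCtx : Type
  | hole : BCtx
  | commaL : BCtx → Bunch → BCtx
  | commaR : Bunch → BCtx → BCtx
  | semicL : BCtx → Bunch → BCtx
  | semicR : Bunch → BCtx → BCtx

/-- Filling the hole of a bunched context with a bunch. -/
def BCtx.fill : BCtx → Bunch → Bunch
  | .hole, Δ => Δ
  | .commaL C Γ, Δ => .comma (C.fill Δ) Γ
  | .commaR Γ C, Δ => .comma Γ (C.fill Δ)
  | .semicL C Γ, Δ => .semic (C.fill Δ) Γ
  | .semicR Γ C, Δ => .semic Γ (C.fill Δ)

/-- Equivalence of bunches: commutative-monoid laws for (',', ∅ₘ) and (';', ∅ₐ),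
under arbitrary bunched contexts. -/
inductive BEquiv : Bunch → Bunch → Prop
  | refl (Δ : Bunch) : BEquiv Δ Δ
  | symm {Δ Δ' : Bunch} : BEquiv Δ Δ' → BEquiv Δ' Δ
  | trans {Δ₁ Δ₂ Δ₃ : Bunch} : BEquiv Δ₁ Δ₂ → BEquiv Δ₂ Δ₃ → BEquiv Δ₁ Δ₃
  | commaComm (Δ₁ Δ₂ : Bunch) : BEquiv (.comma Δ₁ Δ₂) (.comma Δ₂ Δ₁)
  | semicComm (Δ₁ Δ₂ : Bunch) : BEquiv (.semic Δ₁ Δ₂) (.semic Δ₂ Δ₁)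
  | commaAssoc (Δ₁ Δ₂ Δ₃ : Bunch) :
      BEquiv (.comma Δ₁ (.comma Δ₂ Δ₃)) (.comma (.comma Δ₁ Δ₂) Δ₃)
  | semicAssoc (Δ₁ Δ₂ Δ₃ : Bunch) :
      BEquiv (.semic Δ₁ (.semic Δ₂ Δ₃)) (.semic (.semic Δ₁ Δ₂) Δ₃)
  | commaUnit (Δ : Bunch) : BEquiv (.comma Δ .mempty) Δ
  | semicUnit (Δ : Bunch) : BEquiv (.semic Δ .aempty) Δ
  | ctx (C : BCtx) {Δ Δ' : Bunch} : BEquiv Δ Δ' → BEquiv (C.fill Δ) (C.fill Δ')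

/-- Cut-free sequent calculus for BI, with the axiom rule restricted to atoms. -/
inductive Proves : Bunch → Frml → Prop
  | ax (a : Nat) : Proves (.frml (.atom a)) (.atom a)
  | equiv {Δ Δ' : Bunch} {φ : Frml} :
      Proves Δ' φ → BEquiv Δ Δ' → Proves Δ φ
  | weaken (C : BCtx) {Δ₁ Δ₂ : Bunch} {φ : Frml} :
      Proves (C.fill Δ₁) φ → Proves (C.fill (.semic Δ₁ Δ₂)) φ
  | contract (C : BCtx) {Δ₁ : Bunch} {φ : Frml} :
      Proves (C.fill (.semic Δ₁ Δ₁)) φ → Proves (C.fill Δ₁) φ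
  | empR : Proves .mempty .emp
  | empL (C : BCtx) {φ : Frml} :
      Proves (C.fill .mempty) φ → Proves (C.fill (.frml .emp)) φ
  | sepR {Δ₁ Δ₂ : Bunch} {φ ψ : Frml} :
      Proves Δ₁ φ → Proves Δ₂ ψ → Proves (.comma Δ₁ Δ₂) (.sep φ ψ)
  | sepL (C : BCtx) {φ ψ χ : Frml} :
      Proves (C.fill (.comma (.frml φ) (.frml ψ))) χ →
      Proves (C.fill (.frml (.sep φ ψ))) χ
  | wandR {Δ : Bunch} {φ ψ : Frml} :
      Proves (.comma Δ (.frml φ)) ψ → Proves Δ (.wand φ ψ)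
  | wandL (C : BCtx) {Δ₁ Δ₂ : Bunch} {φ ψ χ : Frml} :
      Proves Δ₁ φ → Proves (C.fill (.comma Δ₂ (.frml ψ))) χ →
      Proves (C.fill (.comma (.comma Δ₁ Δ₂) (.frml (.wand φ ψ)))) χ
  | topR : Proves .aempty .top
  | topL (C : BCtx) {φ : Frml} :
      Proves (C.fill .aempty) φ → Proves (C.fill (.frml .top)) φ
  | andR {Δ₁ Δ₂ : Bunch} {φ ψ : Frml} :
      Proves Δ₁ φ → Proves Δ₂ ψ → Proves (.semic Δ₁ Δ₂) (.and φ ψ)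
  | andL (C : BCtx) {φ ψ χ : Frml} :
      Proves (C.fill (.semic (.frml φ) (.frml ψ))) χ →
      Proves (C.fill (.frml (.and φ ψ))) χ
  | impR {Δ : Bunch} {φ ψ : Frml} :
      Proves (.semic Δ (.frml φ)) ψ → Proves Δ (.imp φ ψ)
  | impL (C : BCtx) {Δ₁ Δ₂ : Bunch} {φ ψ χ : Frml} :
      Proves Δ₁ φ → Proves (C.fill (.semic Δ₂ (.frml ψ))) χ →
      Proves (C.fill (.semic (.semic Δ₁ Δ₂) (.frml (.imp φ ψ)))) χ
  | botL (C : BCtx) {φ : Frml} : Proves (C.fill (.frml .bot)) φ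
  | orR1 {Δ : Bunch} {φ ψ : Frml} : Proves Δ φ → Proves Δ (.or φ ψ)
  | orR2 {Δ : Bunch} {φ ψ : Frml} : Proves Δ ψ → Proves Δ (.or φ ψ)
  | orL (C : BCtx) {φ ψ χ : Frml} :
      Proves (C.fill (.frml φ)) χ → Proves (C.fill (.frml ψ)) χ →
      Proves (C.fill (.frml (.or φ ψ))) χ

/-- The formula collapse `⟨Δ⟩` of a bunch. -/
def Bunch.collapse : Bunch → Frml
  | .frml φ => φ
  | .mempty => .emp
  | .aempty => .top
  | .comma Δ₁ Δ₂ => .sep Δ₁.collapse Δ₂.collapse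
  | .semic Δ₁ Δ₂ => .and Δ₁.collapse Δ₂.collapse

/-- The principal closed set `⟦φ⟧ = {Δ | Δ ⊢cf φ}`. -/
def pr (φ : Frml) : Set Bunch := {Δ | Proves Δ φ}

/-- The Moore closure generated by the principal sets:
`cl X = ⋂ {⟦φ⟧ | X ⊆ ⟦φ⟧}`. -/
def clB (X : Set Bunch) : Set Bunch := ⋂₀ {Y | ∃ φ : Frml, Y = pr φ ∧ X ⊆ Y}

/-- A set of bunches is closed if it is a fixpoint of the closure operator. -/
def ClosedB (X : Set Bunch) : Prop := clB X = X


/- ===== Auxiliary development ===== -/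

deriving instance DecidableEq for Frml

/-- Composition of bunched contexts. -/
def BCtx.comp : BCtx → BCtx → BCtx
  | .hole, D => D
  | .commaL C Γ, D => .commaL (C.comp D) Γ
  | .commaR Γ C, D => .commaR Γ (C.comp D)
  | .semicL C Γ, D => .semicL (C.comp D) Γ
  | .semicR Γ C, D => .semicR Γ (C.comp D)

lemma BCtx.fill_comp (C D : BCtx) (Δ : Bunch) :
    (C.comp D).fill Δ = C.fill (D.fill Δ) := by
  induction C <;> simp [BCtx.comp, BCtx.fill, *]

/-- A size function on formulas. -/
def fsize : Frml → Nat
  | .atom _ => 1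
  | .top => 1
  | .bot => 1
  | .emp => 1
  | .and φ ψ => fsize φ + fsize ψ + 1
  | .or φ ψ => fsize φ + fsize ψ + 1
  | .imp φ ψ => fsize φ + fsize ψ + 1
  | .sep φ ψ => fsize φ + fsize ψ + 1
  | .wand φ ψ => fsize φ + fsize ψ + 1

lemma fsize_pos (φ : Frml) : 0 < fsize φ := by cases φ <;> simp [fsize]

lemma ne_sep_left (φ ψ : Frml) : φ ≠ .sep φ ψ := by
  intro h; have := congrArg fsize h; have := fsize_pos ψ; simp [fsize] at *; omega

lemma ne_sep_right (φ ψ : Frml) : ψ ≠ .sep φ ψ := by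
  intro h; have := congrArg fsize h; have := fsize_pos φ; simp [fsize] at *; omega

lemma ne_and_left (φ ψ : Frml) : φ ≠ .and φ ψ := by
  intro h; have := congrArg fsize h; have := fsize_pos ψ; simp [fsize] at *; omega

lemma ne_and_right (φ ψ : Frml) : ψ ≠ .and φ ψ := by
  intro h; have := congrArg fsize h; have := fsize_pos φ; simp [fsize] at *; omega

/-- Substitution of a bunch for all leaf occurrences of a formula. -/
def subB (ψ₀ : Frml) (b₀ : Bunch) : Bunch → Bunch
  | .frml ψ => if ψ = ψ₀ then b₀ else .frml ψ
  | .mempty => .mempty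
  | .aempty => .aempty
  | .comma Δ₁ Δ₂ => .comma (subB ψ₀ b₀ Δ₁) (subB ψ₀ b₀ Δ₂)
  | .semic Δ₁ Δ₂ => .semic (subB ψ₀ b₀ Δ₁) (subB ψ₀ b₀ Δ₂)

def subC (ψ₀ : Frml) (b₀ : Bunch) : BCtx → BCtx
  | .hole => .hole
  | .commaL C Γ => .commaL (subC ψ₀ b₀ C) (subB ψ₀ b₀ Γ)
  | .commaR Γ C => .commaR (subB ψ₀ b₀ Γ) (subC ψ₀ b₀ C)
  | .semicL C Γ => .semicL (subC ψ₀ b₀ C) (subB ψ₀ b₀ Γ)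
  | .semicR Γ C => .semicR (subB ψ₀ b₀ Γ) (subC ψ₀ b₀ C)

lemma subB_fill (ψ₀ : Frml) (b₀ : Bunch) (C : BCtx) (Δ : Bunch) :
    subB ψ₀ b₀ (C.fill Δ) = (subC ψ₀ b₀ C).fill (subB ψ₀ b₀ Δ) := by
  induction C <;> simp [BCtx.fill, subB, subC, *]

lemma subB_bequiv {ψ₀ : Frml} {b₀ : Bunch} {Δ Δ' : Bunch} (h : BEquiv Δ Δ') :
    BEquiv (subB ψ₀ b₀ Δ) (subB ψ₀ b₀ Δ') := by
  induction h with
  | refl => exact .refl _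
  | symm _ ih => exact ih.symm
  | trans _ _ ih₁ ih₂ => exact ih₁.trans ih₂
  | commaComm => exact .commaComm _ _
  | semicComm => exact .semicComm _ _
  | commaAssoc => exact .commaAssoc _ _ _
  | semicAssoc => exact .semicAssoc _ _ _
  | commaUnit Δ => exact .commaUnit _
  | semicUnit Δ => exact .semicUnit _
  | ctx C _ ih => rw [subB_fill, subB_fill]; exact .ctx _ ih

/-- The shapes of substitution we need: principal formula of an invertible left rule. -/
def OK (ψ₀ : Frml) (b₀ : Bunch) : Prop :=
  (ψ₀ = .emp ∧ b₀ = .mempty) ∨ (ψ₀ = .top ∧ b₀ = .aempty) ∨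
  (∃ φ ψ, ψ₀ = .sep φ ψ ∧ b₀ = .comma (.frml φ) (.frml ψ)) ∨
  (∃ φ ψ, ψ₀ = .and φ ψ ∧ b₀ = .semic (.frml φ) (.frml ψ))

lemma OK.left {ψ₀ : Frml} {b₀ : Bunch} (h : OK ψ₀ b₀) (C : BCtx) {χ : Frml}
    (hp : Proves (C.fill b₀) χ) : Proves (C.fill (.frml ψ₀)) χ := by
  rcases h with ⟨h1, h2⟩ | ⟨h1, h2⟩ | ⟨φ, ψ, h1, h2⟩ | ⟨φ, ψ, h1, h2⟩ <;> subst h1 <;> subst h2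
  · exact .empL C hp
  · exact .topL C hp
  · exact .sepL C hp
  · exact .andL C hp

lemma OK.sub_self {ψ₀ : Frml} {b₀ : Bunch} (h : OK ψ₀ b₀) : subB ψ₀ b₀ b₀ = b₀ := by
  rcases h with ⟨h1, h2⟩ | ⟨h1, h2⟩ | ⟨φ, ψ, h1, h2⟩ | ⟨φ, ψ, h1, h2⟩ <;> subst h1 <;> subst h2
  · rfl
  · rfl
  · simp [subB, ne_sep_left, ne_sep_right]
  · simp [subB, ne_and_left, ne_and_right]

/-- Restore a single substituted formula leaf, using the left rule. -/
lemma OK.res {ψ₀ : Frml} {b₀ : Bunch} (h : OK ψ₀ b₀) (C : BCtx) (ψ : Frml) {χ : Frml}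
    (hp : Proves (C.fill (subB ψ₀ b₀ (.frml ψ))) χ) : Proves (C.fill (.frml ψ)) χ := by
  by_cases hψ : ψ = ψ₀
  · subst hψ; simp only [subB, if_pos rfl] at hp; exact h.left C hp
  · simpa only [subB, if_neg hψ] using hp

lemma OK.ne_atom {ψ₀ : Frml} {b₀ : Bunch} (h : OK ψ₀ b₀) (a : Nat) : Frml.atom a ≠ ψ₀ := by
  rcases h with ⟨h1, _⟩ | ⟨h1, _⟩ | ⟨φ, ψ, h1, _⟩ | ⟨φ, ψ, h1, _⟩ <;> subst h1 <;> simp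

lemma OK.ne_bot {ψ₀ : Frml} {b₀ : Bunch} (h : OK ψ₀ b₀) : Frml.bot ≠ ψ₀ := by
  rcases h with ⟨h1, _⟩ | ⟨h1, _⟩ | ⟨φ, ψ, h1, _⟩ | ⟨φ, ψ, h1, _⟩ <;> subst h1 <;> simp

lemma OK.ne_wand {ψ₀ : Frml} {b₀ : Bunch} (h : OK ψ₀ b₀) (φ ψ : Frml) :
    Frml.wand φ ψ ≠ ψ₀ := by
  rcases h with ⟨h1, _⟩ | ⟨h1, _⟩ | ⟨a, b, h1, _⟩ | ⟨a, b, h1, _⟩ <;> subst h1 <;> simp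

lemma OK.ne_imp {ψ₀ : Frml} {b₀ : Bunch} (h : OK ψ₀ b₀) (φ ψ : Frml) :
    Frml.imp φ ψ ≠ ψ₀ := by
  rcases h with ⟨h1, _⟩ | ⟨h1, _⟩ | ⟨a, b, h1, _⟩ | ⟨a, b, h1, _⟩ <;> subst h1 <;> simp

lemma OK.ne_or {ψ₀ : Frml} {b₀ : Bunch} (h : OK ψ₀ b₀) (φ ψ : Frml) :
    Frml.or φ ψ ≠ ψ₀ := by
  rcases h with ⟨h1, _⟩ | ⟨h1, _⟩ | ⟨a, b, h1, _⟩ | ⟨a, b, h1, _⟩ <;> subst h1 <;> simp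

/-- Key lemma: provability is stable under substituting `b₀` for `ψ₀`. -/
lemma subst_proves {ψ₀ : Frml} {b₀ : Bunch} (h : OK ψ₀ b₀) {Γ : Bunch} {χ : Frml}
    (hp : Proves Γ χ) : Proves (subB ψ₀ b₀ Γ) χ := by
  induction hp with
  | ax a => simp only [subB, if_neg (h.ne_atom a)]; exact .ax a
  | equiv _ he ih => exact .equiv ih (subB_bequiv he)
  | weaken C _ ih =>
      rw [subB_fill] at *; exact .weaken _ ih
  | contract C _ ih =>
      rw [subB_fill] at *; exact .contract _ ih
  | empR => exact .empR
  | @empL C φ _ ih =>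
      rw [subB_fill] at *
      by_cases he : Frml.emp = ψ₀
      · have hb : b₀ = .mempty := by
          rcases h with ⟨h1, h2⟩ | ⟨h1, h2⟩ | ⟨a, b, h1, h2⟩ | ⟨a, b, h1, h2⟩ <;>
            rw [← he] at h1 <;> first | exact h2 | simp at h1
        subst hb
        simpa only [subB, if_pos he] using ih
      · simp only [subB, if_neg he]
        exact .empL _ (by simpa only [subB] using ih)
  | sepR _ _ ih₁ ih₂ => exact .sepR ih₁ ih₂
  | @sepL C φ ψ χ' _ ih =>
      rw [subB_fill] at *
      by_cases he : Frml.sep φ ψ = ψ₀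
      · have hb : b₀ = .comma (.frml φ) (.frml ψ) := by
          rcases h with ⟨h1, h2⟩ | ⟨h1, h2⟩ | ⟨a, b, h1, h2⟩ | ⟨a, b, h1, h2⟩ <;>
            rw [← he] at h1 <;> simp at h1
          obtain ⟨rfl, rfl⟩ := h1; exact h2
        subst hb
        have hφ : φ ≠ ψ₀ := by rw [← he]; exact ne_sep_left φ ψ
        have hψ : ψ ≠ ψ₀ := by rw [← he]; exact ne_sep_right φ ψ
        simp only [subB, if_pos he]
        simpa only [subB, if_neg hφ, if_neg hψ] using ih
      · simp only [subB, if_neg he]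
        apply Proves.sepL
        simp only [subB] at ih
        have h1 := h.res ((subC ψ₀ b₀ C).comp (.commaL .hole (subB ψ₀ b₀ (.frml ψ)))) φ
          (by rw [BCtx.fill_comp]; exact ih)
        rw [BCtx.fill_comp] at h1
        have h2 := h.res ((subC ψ₀ b₀ C).comp (.commaR (.frml φ) .hole)) ψ
          (by rw [BCtx.fill_comp]; exact h1)
        rw [BCtx.fill_comp] at h2
        exact h2
  | @wandR Δ φ ψ _ ih =>
      apply Proves.wandR
      exact h.res (.commaR (subB ψ₀ b₀ Δ) .hole) φ ih
  | @wandL C Δ₁ Δ₂ φ ψ χ' _ _ ih₁ ih₂ =>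
      rw [subB_fill] at *
      simp only [subB, if_neg (h.ne_wand φ ψ)]
      apply Proves.wandL _ ih₁
      have := h.res ((subC ψ₀ b₀ C).comp (.commaR (subB ψ₀ b₀ Δ₂) .hole)) ψ
        (by rw [BCtx.fill_comp]; simpa only [subB, BCtx.fill] using ih₂)
      rw [BCtx.fill_comp] at this
      exact this
  | topR => exact .topR
  | @topL C φ _ ih =>
      rw [subB_fill] at *
      by_cases he : Frml.top = ψ₀
      · have hb : b₀ = .aempty := by
          rcases h with ⟨h1, h2⟩ | ⟨h1, h2⟩ | ⟨a, b, h1, h2⟩ | ⟨a, b, h1, h2⟩ <;>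
            rw [← he] at h1 <;> first | exact h2 | simp at h1
        subst hb
        simpa only [subB, if_pos he] using ih
      · simp only [subB, if_neg he]
        exact .topL _ (by simpa only [subB] using ih)
  | andR _ _ ih₁ ih₂ => exact .andR ih₁ ih₂
  | @andL C φ ψ χ' _ ih =>
      rw [subB_fill] at *
      by_cases he : Frml.and φ ψ = ψ₀
      · have hb : b₀ = .semic (.frml φ) (.frml ψ) := by
          rcases h with ⟨h1, h2⟩ | ⟨h1, h2⟩ | ⟨a, b, h1, h2⟩ | ⟨a, b, h1, h2⟩ <;>
            rw [← he] at h1 <;> simp at h1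
          obtain ⟨rfl, rfl⟩ := h1; exact h2
        subst hb
        have hφ : φ ≠ ψ₀ := by rw [← he]; exact ne_and_left φ ψ
        have hψ : ψ ≠ ψ₀ := by rw [← he]; exact ne_and_right φ ψ
        simp only [subB, if_pos he]
        simpa only [subB, if_neg hφ, if_neg hψ] using ih
      · simp only [subB, if_neg he]
        apply Proves.andL
        simp only [subB] at ih
        have h1 := h.res ((subC ψ₀ b₀ C).comp (.semicL .hole (subB ψ₀ b₀ (.frml ψ)))) φ
          (by rw [BCtx.fill_comp]; exact ih)
        rw [BCtx.fill_comp] at h1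
        have h2 := h.res ((subC ψ₀ b₀ C).comp (.semicR (.frml φ) .hole)) ψ
          (by rw [BCtx.fill_comp]; exact h1)
        rw [BCtx.fill_comp] at h2
        exact h2
  | @impR Δ φ ψ _ ih =>
      apply Proves.impR
      exact h.res (.semicR (subB ψ₀ b₀ Δ) .hole) φ ih
  | @impL C Δ₁ Δ₂ φ ψ χ' _ _ ih₁ ih₂ =>
      rw [subB_fill] at *
      simp only [subB, if_neg (h.ne_imp φ ψ)]
      apply Proves.impL _ ih₁
      have := h.res ((subC ψ₀ b₀ C).comp (.semicR (subB ψ₀ b₀ Δ₂) .hole)) ψ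
        (by rw [BCtx.fill_comp]; simpa only [subB, BCtx.fill] using ih₂)
      rw [BCtx.fill_comp] at this
      exact this
  | botL C =>
      rw [subB_fill]; simp only [subB, if_neg h.ne_bot]; exact .botL _
  | orR1 _ ih => exact .orR1 ih
  | orR2 _ ih => exact .orR2 ih
  | @orL C φ ψ χ' _ _ ih₁ ih₂ =>
      rw [subB_fill] at *
      simp only [subB, if_neg (h.ne_or φ ψ)]
      exact .orL _ (h.res _ φ ih₁) (h.res _ ψ ih₂)

/-- Restore an entire substituted bunch. -/
lemma OK.restore {ψ₀ : Frml} {b₀ : Bunch} (h : OK ψ₀ b₀) :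
    ∀ (Γ : Bunch) (C : BCtx) {χ : Frml},
      Proves (C.fill (subB ψ₀ b₀ Γ)) χ → Proves (C.fill Γ) χ := by
  intro Γ
  induction Γ with
  | frml ψ => intro C χ hp; exact h.res C ψ hp
  | mempty => intro C χ hp; exact hp
  | aempty => intro C χ hp; exact hp
  | comma Δ₁ Δ₂ ih₁ ih₂ =>
      intro C χ hp
      simp only [subB] at hp
      have h1 := ih₁ (C.comp (.commaL .hole (subB ψ₀ b₀ Δ₂)))
        (by rw [BCtx.fill_comp]; exact hp)
      rw [BCtx.fill_comp] at h1
      have h2 := ih₂ (C.comp (.commaR Δ₁ .hole)) (by rw [BCtx.fill_comp]; exact h1)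
      rw [BCtx.fill_comp] at h2
      exact h2
  | semic Δ₁ Δ₂ ih₁ ih₂ =>
      intro C χ hp
      simp only [subB] at hp
      have h1 := ih₁ (C.comp (.semicL .hole (subB ψ₀ b₀ Δ₂)))
        (by rw [BCtx.fill_comp]; exact hp)
      rw [BCtx.fill_comp] at h1
      have h2 := ih₂ (C.comp (.semicR Δ₁ .hole)) (by rw [BCtx.fill_comp]; exact h1)
      rw [BCtx.fill_comp] at h2
      exact h2

/-- Single-occurrence invertibility of the left rules. -/
lemma OK.inv {ψ₀ : Frml} {b₀ : Bunch} (h : OK ψ₀ b₀) (C : BCtx) {χ : Frml}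
    (hp : Proves (C.fill (.frml ψ₀)) χ) : Proves (C.fill b₀) χ := by
  have h1 := subst_proves h hp
  rw [subB_fill] at h1
  simp only [subB, if_pos rfl] at h1
  have h2 : Proves ((subC ψ₀ b₀ C).fill (subB ψ₀ b₀ b₀)) χ := by rw [h.sub_self]; exact h1
  rw [← subB_fill] at h2
  exact h.restore (C.fill b₀) .hole h2

/-- Collapse on the left (easy direction, via the left rules). -/
lemma collapse_intro : ∀ (Δ : Bunch) (C : BCtx) {χ : Frml},
    Proves (C.fill Δ) χ → Proves (C.fill (.frml Δ.collapse)) χ := by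
  intro Δ
  induction Δ with
  | frml φ => intro C χ hp; exact hp
  | mempty => intro C χ hp; exact .empL C hp
  | aempty => intro C χ hp; exact .topL C hp
  | comma Δ₁ Δ₂ ih₁ ih₂ =>
      intro C χ hp
      apply Proves.sepL
      have h1 := ih₁ (C.comp (.commaL .hole Δ₂)) (by rw [BCtx.fill_comp]; exact hp)
      rw [BCtx.fill_comp] at h1
      have h2 := ih₂ (C.comp (.commaR (.frml Δ₁.collapse) .hole))
        (by rw [BCtx.fill_comp]; exact h1)
      rw [BCtx.fill_comp] at h2
      exact h2
  | semic Δ₁ Δ₂ ih₁ ih₂ =>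
      intro C χ hp
      apply Proves.andL
      have h1 := ih₁ (C.comp (.semicL .hole Δ₂)) (by rw [BCtx.fill_comp]; exact hp)
      rw [BCtx.fill_comp] at h1
      have h2 := ih₂ (C.comp (.semicR (.frml Δ₁.collapse) .hole))
        (by rw [BCtx.fill_comp]; exact h1)
      rw [BCtx.fill_comp] at h2
      exact h2

/-- Collapse inversion (hard direction, via invertibility). -/
lemma collapse_elim : ∀ (Δ : Bunch) (C : BCtx) {χ : Frml},
    Proves (C.fill (.frml Δ.collapse)) χ → Proves (C.fill Δ) χ := by
  intro Δ
  induction Δ with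
  | frml φ => intro C χ hp; exact hp
  | mempty => intro C χ hp; exact OK.inv (Or.inl ⟨rfl, rfl⟩) C hp
  | aempty => intro C χ hp; exact OK.inv (Or.inr (Or.inl ⟨rfl, rfl⟩)) C hp
  | comma Δ₁ Δ₂ ih₁ ih₂ =>
      intro C χ hp
      have h0 := OK.inv (ψ₀ := .sep Δ₁.collapse Δ₂.collapse)
        (Or.inr (Or.inr (Or.inl ⟨_, _, rfl, rfl⟩))) C hp
      have h1 := ih₁ (C.comp (.commaL .hole (.frml Δ₂.collapse)))
        (by rw [BCtx.fill_comp]; exact h0)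
      rw [BCtx.fill_comp] at h1
      have h2 := ih₂ (C.comp (.commaR Δ₁ .hole)) (by rw [BCtx.fill_comp]; exact h1)
      rw [BCtx.fill_comp] at h2
      exact h2
  | semic Δ₁ Δ₂ ih₁ ih₂ =>
      intro C χ hp
      have h0 := OK.inv (ψ₀ := .and Δ₁.collapse Δ₂.collapse)
        (Or.inr (Or.inr (Or.inr ⟨_, _, rfl, rfl⟩))) C hp
      have h1 := ih₁ (C.comp (.semicL .hole (.frml Δ₂.collapse)))
        (by rw [BCtx.fill_comp]; exact h0)
      rw [BCtx.fill_comp] at h1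
      have h2 := ih₂ (C.comp (.semicR Δ₁ .hole)) (by rw [BCtx.fill_comp]; exact h1)
      rw [BCtx.fill_comp] at h2
      exact h2

/-- basic properties of closed sets of bunches. -/
theorem closed_set_laws (X : Set Bunch) (hX : ClosedB X) :
    (Bunch.frml .bot ∈ X) ∧
    (∀ Δ Δ' : Bunch, Δ ∈ X → Bunch.semic Δ Δ' ∈ X) ∧
    (∀ Δ : Bunch, Bunch.semic Δ Δ ∈ X → Δ ∈ X) ∧
    (∀ Δ : Bunch, Δ ∈ X ↔ Bunch.frml Δ.collapse ∈ X) := by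
  have hmem : ∀ Δ : Bunch, Δ ∈ X ↔ ∀ φ : Frml, X ⊆ pr φ → Proves Δ φ := by
    intro Δ
    constructor
    · intro hΔ φ hsub; exact hsub hΔ
    · intro hall
      rw [← hX]
      intro Y hY
      rcases hY with ⟨φ, rfl, hsub⟩
      exact hall φ hsub
  refine ⟨?_, ?_, ?_, ?_⟩
  · rw [hmem]; intro φ _; exact Proves.botL .hole
  · intro Δ Δ' hΔ
    rw [hmem] at *
    intro φ hsub
    exact Proves.weaken .hole (hΔ φ hsub)
  · intro Δ hΔ
    rw [hmem] at *
    intro φ hsub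
    exact Proves.contract .hole (hΔ φ hsub)
  · intro Δ
    rw [hmem, hmem]
    constructor
    · intro hΔ φ hsub
      exact collapse_intro Δ .hole (hΔ φ hsub)
    · intro hΔ φ hsub
      exact collapse_elim Δ .hole (hΔ φ hsub)
end

section
/- In the Moore collection C of cut-free-closed sets of bunches, for closed X and Y the set {Δ | ∀Δ' ∈ X, (Δ ; Δ') ∈ Y} is closed and is the Heyting implication X → Y in C (i.e., for closed Z: Z ∩ X ⊆ Y iff Z ⊆ X → Y). -/
/-- Collapsing a sub-bunch on the left is admissible. -/
lemma collapse_left : ∀ (Γ : Bunch) (C : BCtx) {φ : Frml},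
    Proves (C.fill Γ) φ → Proves (C.fill (.frml Γ.collapse)) φ
  | .frml _, _, _, h => h
  | .mempty, C, _, h => Proves.empL C h
  | .aempty, C, _, h => Proves.topL C h
  | .comma Γ₁ Γ₂, C, φ, h => by
      have h1 := collapse_left Γ₁ (C.comp (.commaL .hole Γ₂))
        (by rwa [BCtx.fill_comp])
      rw [BCtx.fill_comp] at h1
      have h2 := collapse_left Γ₂ (C.comp (.commaR (.frml Γ₁.collapse) .hole))
        (by rwa [BCtx.fill_comp])
      rw [BCtx.fill_comp] at h2
      exact Proves.sepL C h2
  | .semic Γ₁ Γ₂, C, φ, h => by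
      have h1 := collapse_left Γ₁ (C.comp (.semicL .hole Γ₂))
        (by rwa [BCtx.fill_comp])
      rw [BCtx.fill_comp] at h1
      have h2 := collapse_left Γ₂ (C.comp (.semicR (.frml Γ₁.collapse) .hole))
        (by rwa [BCtx.fill_comp])
      rw [BCtx.fill_comp] at h2
      exact Proves.andL C h2

/-- Inversion of the right implication rule. -/
lemma impR_inv {Δ : Bunch} {χ : Frml} (h : Proves Δ χ) :
    ∀ {φ ψ : Frml}, χ = .imp φ ψ → Proves (.semic Δ (.frml φ)) ψ := by
  induction h with
  | ax a => intro φ ψ h; exact absurd h (by simp)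
  | equiv _ e ih =>
      intro φ ψ rfl
      exact Proves.equiv (ih rfl) (BEquiv.ctx (.semicL .hole (.frml φ)) e)
  | weaken C _ ih => intro φ ψ rfl; exact Proves.weaken (.semicL C (.frml φ)) (ih rfl)
  | contract C _ ih => intro φ ψ rfl; exact Proves.contract (.semicL C (.frml φ)) (ih rfl)
  | empR => intro φ ψ h; exact absurd h (by simp)
  | empL C _ ih => intro φ ψ rfl; exact Proves.empL (.semicL C (.frml φ)) (ih rfl)
  | sepR _ _ _ _ => intro φ ψ h; exact absurd h (by simp)
  | sepL C _ ih => intro φ ψ rfl; exact Proves.sepL (.semicL C (.frml φ)) (ih rfl)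
  | wandR _ _ => intro φ ψ h; exact absurd h (by simp)
  | wandL C h1 _ _ ih2 =>
      intro φ ψ rfl; exact Proves.wandL (.semicL C (.frml φ)) h1 (ih2 rfl)
  | topR => intro φ ψ h; exact absurd h (by simp)
  | topL C _ ih => intro φ ψ rfl; exact Proves.topL (.semicL C (.frml φ)) (ih rfl)
  | andR _ _ _ _ => intro φ ψ h; exact absurd h (by simp)
  | andL C _ ih => intro φ ψ rfl; exact Proves.andL (.semicL C (.frml φ)) (ih rfl)
  | impR h _ => intro φ ψ he; cases he; exact h
  | impL C h1 _ _ ih2 =>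
      intro φ ψ rfl; exact Proves.impL (.semicL C (.frml φ)) h1 (ih2 rfl)
  | botL C => intro φ ψ rfl; exact Proves.botL (.semicL C (.frml φ))
  | orR1 _ _ => intro φ ψ h; exact absurd h (by simp)
  | orR2 _ _ => intro φ ψ h; exact absurd h (by simp)
  | orL C _ _ ih1 ih2 =>
      intro φ ψ rfl; exact Proves.orL (.semicL C (.frml φ)) (ih1 rfl) (ih2 rfl)

/-- `Exp Δ Δ'`: `Δ'` is obtained from `Δ` by collapsing some subtrees to formulas. -/
inductive Exp : Bunch → Bunch → Prop
  | collapse (Δ : Bunch) : Exp Δ (.frml Δ.collapse)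
  | mempty : Exp .mempty .mempty
  | aempty : Exp .aempty .aempty
  | comma {a a' b b' : Bunch} : Exp a a' → Exp b b' → Exp (.comma a b) (.comma a' b')
  | semic {a a' b b' : Bunch} : Exp a a' → Exp b b' → Exp (.semic a b) (.semic a' b')

lemma Exp.rfl : ∀ Δ : Bunch, Exp Δ Δ
  | .frml φ => Exp.collapse (.frml φ)
  | .mempty => .mempty
  | .aempty => .aempty
  | .comma a b => .comma (Exp.rfl a) (Exp.rfl b)
  | .semic a b => .semic (Exp.rfl a) (Exp.rfl b)

lemma exp_frml {Δ : Bunch} {ψ : Frml} : Exp Δ (.frml ψ) ↔ Δ.collapse = ψ := by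
  constructor
  · intro h; cases h; rfl
  · rintro rfl; exact Exp.collapse Δ

lemma collapse_atom {Δ : Bunch} {a : Nat} (h : Δ.collapse = .atom a) :
    Δ = .frml (.atom a) := by cases Δ <;> simp_all [Bunch.collapse]
lemma collapse_bot {Δ : Bunch} (h : Δ.collapse = .bot) :
    Δ = .frml .bot := by cases Δ <;> simp_all [Bunch.collapse]
lemma collapse_imp {Δ : Bunch} {a b : Frml} (h : Δ.collapse = .imp a b) :
    Δ = .frml (.imp a b) := by cases Δ <;> simp_all [Bunch.collapse]
lemma collapse_wand {Δ : Bunch} {a b : Frml} (h : Δ.collapse = .wand a b) :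
    Δ = .frml (.wand a b) := by cases Δ <;> simp_all [Bunch.collapse]
lemma collapse_or {Δ : Bunch} {a b : Frml} (h : Δ.collapse = .or a b) :
    Δ = .frml (.or a b) := by cases Δ <;> simp_all [Bunch.collapse]
lemma collapse_emp {Δ : Bunch} (h : Δ.collapse = .emp) :
    Δ = .frml .emp ∨ Δ = .mempty := by cases Δ <;> simp_all [Bunch.collapse]
lemma collapse_top {Δ : Bunch} (h : Δ.collapse = .top) :
    Δ = .frml .top ∨ Δ = .aempty := by cases Δ <;> simp_all [Bunch.collapse]
lemma collapse_sep {Δ : Bunch} {a b : Frml} (h : Δ.collapse = .sep a b) :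
    Δ = .frml (.sep a b) ∨
      ∃ Δ₁ Δ₂, Δ = .comma Δ₁ Δ₂ ∧ Δ₁.collapse = a ∧ Δ₂.collapse = b := by
  cases Δ <;> simp_all [Bunch.collapse]
lemma collapse_and {Δ : Bunch} {a b : Frml} (h : Δ.collapse = .and a b) :
    Δ = .frml (.and a b) ∨
      ∃ Δ₁ Δ₂, Δ = .semic Δ₁ Δ₂ ∧ Δ₁.collapse = a ∧ Δ₂.collapse = b := by
  cases Δ <;> simp_all [Bunch.collapse]

/-- Decomposition of an expansion along a context. -/
lemma exp_fill (C : BCtx) : ∀ {Δ Θ : Bunch}, Exp Δ (C.fill Θ) →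
    ∃ C₀ Γ, Δ = BCtx.fill C₀ Γ ∧ Exp Γ Θ ∧
      ∀ Γ' Θ', Exp Γ' Θ' → Exp (BCtx.fill C₀ Γ') (C.fill Θ') := by
  induction C with
  | hole =>
      intro Δ Θ h
      exact ⟨BCtx.hole, Δ, rfl, h, fun _ _ h' => h'⟩
  | commaL C B ih =>
      intro Δ Θ h
      simp only [BCtx.fill] at h
      cases h with
      | comma h1 h2 =>
        obtain ⟨C₀, Γ, rfl, hΓ, hpt⟩ := ih h1
        exact ⟨.commaL C₀ _, Γ, rfl, hΓ,
          fun Γ' Θ' h' => Exp.comma (hpt _ _ h') h2⟩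
  | commaR B C ih =>
      intro Δ Θ h
      simp only [BCtx.fill] at h
      cases h with
      | comma h1 h2 =>
        obtain ⟨C₀, Γ, rfl, hΓ, hpt⟩ := ih h2
        exact ⟨.commaR _ C₀, Γ, rfl, hΓ,
          fun Γ' Θ' h' => Exp.comma h1 (hpt _ _ h')⟩
  | semicL C B ih =>
      intro Δ Θ h
      simp only [BCtx.fill] at h
      cases h with
      | semic h1 h2 =>
        obtain ⟨C₀, Γ, rfl, hΓ, hpt⟩ := ih h1
        exact ⟨.semicL C₀ _, Γ, rfl, hΓ,
          fun Γ' Θ' h' => Exp.semic (hpt _ _ h') h2⟩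
  | semicR B C ih =>
      intro Δ Θ h
      simp only [BCtx.fill] at h
      cases h with
      | semic h1 h2 =>
        obtain ⟨C₀, Γ, rfl, hΓ, hpt⟩ := ih h2
        exact ⟨.semicR _ C₀, Γ, rfl, hΓ,
          fun Γ' Θ' h' => Exp.semic h1 (hpt _ _ h')⟩

/-- Expansion commutes with bunch equivalence, in both directions. -/
lemma bequiv_exp : ∀ {Δ' Δ'' : Bunch}, BEquiv Δ' Δ'' →
    (∀ Δ, Exp Δ Δ' → ∃ Δ₀, BEquiv Δ Δ₀ ∧ Exp Δ₀ Δ'') ∧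
    (∀ Δ, Exp Δ Δ'' → ∃ Δ₀, BEquiv Δ Δ₀ ∧ Exp Δ₀ Δ') := by
  intro Δ' Δ'' e
  induction e with
  | refl Δ =>
      exact ⟨fun Δ₀ h => ⟨Δ₀, .refl _, h⟩, fun Δ₀ h => ⟨Δ₀, .refl _, h⟩⟩
  | symm _ ih => exact ⟨ih.2, ih.1⟩
  | trans _ _ ih1 ih2 =>
      constructor
      · intro Δ h
        obtain ⟨Δ₀, e₀, h₀⟩ := ih1.1 Δ h
        obtain ⟨Δ₁, e₁, h₁⟩ := ih2.1 Δ₀ h₀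
        exact ⟨Δ₁, .trans e₀ e₁, h₁⟩
      · intro Δ h
        obtain ⟨Δ₀, e₀, h₀⟩ := ih2.2 Δ h
        obtain ⟨Δ₁, e₁, h₁⟩ := ih1.2 Δ₀ h₀
        exact ⟨Δ₁, .trans e₀ e₁, h₁⟩
  | commaComm A B =>
      constructor
      · intro Δ h
        cases h with
        | comma h1 h2 => exact ⟨_, .commaComm _ _, .comma h2 h1⟩
      · intro Δ h
        cases h with
        | comma h1 h2 => exact ⟨_, .commaComm _ _, .comma h2 h1⟩
  | semicComm A B =>
      constructor
      · intro Δ h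
        cases h with
        | semic h1 h2 => exact ⟨_, .semicComm _ _, .semic h2 h1⟩
      · intro Δ h
        cases h with
        | semic h1 h2 => exact ⟨_, .semicComm _ _, .semic h2 h1⟩
  | commaAssoc A B C =>
      constructor
      · intro Δ h
        cases h with
        | comma h1 h23 =>
          cases h23 with
          | comma h2 h3 =>
            exact ⟨_, .commaAssoc _ _ _, .comma (.comma h1 h2) h3⟩
      · intro Δ h
        cases h with
        | comma h12 h3 =>
          cases h12 with
          | comma h1 h2 =>
            exact ⟨_, .symm (.commaAssoc _ _ _), .comma h1 (.comma h2 h3)⟩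
  | semicAssoc A B C =>
      constructor
      · intro Δ h
        cases h with
        | semic h1 h23 =>
          cases h23 with
          | semic h2 h3 =>
            exact ⟨_, .semicAssoc _ _ _, .semic (.semic h1 h2) h3⟩
      · intro Δ h
        cases h with
        | semic h12 h3 =>
          cases h12 with
          | semic h1 h2 =>
            exact ⟨_, .symm (.semicAssoc _ _ _), .semic h1 (.semic h2 h3)⟩
  | commaUnit A =>
      constructor
      · intro Δ h
        cases h with
        | comma h1 h2 =>
          cases h2
          exact ⟨_, .commaUnit _, h1⟩
      · intro Δ h
        exact ⟨.comma Δ .mempty, .symm (.commaUnit Δ), .comma h .mempty⟩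
  | semicUnit A =>
      constructor
      · intro Δ h
        cases h with
        | semic h1 h2 =>
          cases h2
          exact ⟨_, .semicUnit _, h1⟩
      · intro Δ h
        exact ⟨.semic Δ .aempty, .symm (.semicUnit Δ), .semic h .aempty⟩
  | ctx C _ ih =>
      constructor
      · intro Δ h
        obtain ⟨C₀, Γ, rfl, hΓ, hpt⟩ := exp_fill C h
        obtain ⟨Γ₀, eΓ, hΓ₀⟩ := ih.1 Γ hΓ
        exact ⟨C₀.fill Γ₀, .ctx C₀ eΓ, hpt _ _ hΓ₀⟩
      · intro Δ h
        obtain ⟨C₀, Γ, rfl, hΓ, hpt⟩ := exp_fill C h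
        obtain ⟨Γ₀, eΓ, hΓ₀⟩ := ih.2 Γ hΓ
        exact ⟨C₀.fill Γ₀, .ctx C₀ eΓ, hpt _ _ hΓ₀⟩

/-- Key inversion: provability is preserved by un-collapsing subtrees. -/
lemma exp_proves {Δ' : Bunch} {φ : Frml} (h : Proves Δ' φ) :
    ∀ {Δ : Bunch}, Exp Δ Δ' → Proves Δ φ := by
  induction h with
  | ax a =>
      intro Δ h
      have := collapse_atom (exp_frml.mp h); subst this
      exact Proves.ax a
  | equiv _ e ih =>
      intro Δ h
      obtain ⟨Δ₀, e₀, h₀⟩ := (bequiv_exp e).1 Δ h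
      exact Proves.equiv (ih h₀) e₀
  | weaken C _ ih =>
      intro Δ h
      obtain ⟨C₀, Γ, rfl, hΓ, hpt⟩ := exp_fill C h
      cases hΓ with
      | semic h1 h2 => exact Proves.weaken C₀ (ih (hpt _ _ h1))
  | contract C _ ih =>
      intro Δ h
      obtain ⟨C₀, Γ, rfl, hΓ, hpt⟩ := exp_fill C h
      exact Proves.contract C₀ (ih (hpt _ _ (.semic hΓ hΓ)))
  | empR =>
      intro Δ h
      cases h with
      | mempty => exact Proves.empR
  | empL C _ ih =>
      intro Δ h
      obtain ⟨C₀, Γ, rfl, hΓ, hpt⟩ := exp_fill C h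
      rcases collapse_emp (exp_frml.mp hΓ) with rfl | rfl
      · exact Proves.empL C₀ (ih (hpt _ _ .mempty))
      · exact ih (hpt _ _ .mempty)
  | sepR _ _ ih1 ih2 =>
      intro Δ h
      cases h with
      | comma h1 h2 => exact Proves.sepR (ih1 h1) (ih2 h2)
  | sepL C _ ih =>
      intro Δ h
      obtain ⟨C₀, Γ, rfl, hΓ, hpt⟩ := exp_fill C h
      rcases collapse_sep (exp_frml.mp hΓ) with rfl | ⟨Γ₁, Γ₂, rfl, hc1, hc2⟩
      · exact Proves.sepL C₀ (ih (hpt _ _ (Exp.rfl _)))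
      · exact ih (hpt _ _ (.comma (exp_frml.mpr hc1) (exp_frml.mpr hc2)))
  | wandR _ ih =>
      intro Δ h
      exact Proves.wandR (ih (.comma h (Exp.rfl _)))
  | wandL C h1 _ ih1 ih2 =>
      intro Δ h
      obtain ⟨C₀, Γ, rfl, hΓ, hpt⟩ := exp_fill C h
      cases hΓ with
      | comma ha hw =>
        cases ha with
        | comma hA hB =>
          have := collapse_wand (exp_frml.mp hw); subst this
          exact Proves.wandL C₀ (ih1 hA) (ih2 (hpt _ _ (.comma hB (Exp.rfl _))))
  | topR =>
      intro Δ h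
      cases h with
      | aempty => exact Proves.topR
  | topL C _ ih =>
      intro Δ h
      obtain ⟨C₀, Γ, rfl, hΓ, hpt⟩ := exp_fill C h
      rcases collapse_top (exp_frml.mp hΓ) with rfl | rfl
      · exact Proves.topL C₀ (ih (hpt _ _ .aempty))
      · exact ih (hpt _ _ .aempty)
  | andR _ _ ih1 ih2 =>
      intro Δ h
      cases h with
      | semic h1 h2 => exact Proves.andR (ih1 h1) (ih2 h2)
  | andL C _ ih =>
      intro Δ h
      obtain ⟨C₀, Γ, rfl, hΓ, hpt⟩ := exp_fill C h
      rcases collapse_and (exp_frml.mp hΓ) with rfl | ⟨Γ₁, Γ₂, rfl, hc1, hc2⟩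
      · exact Proves.andL C₀ (ih (hpt _ _ (Exp.rfl _)))
      · exact ih (hpt _ _ (.semic (exp_frml.mpr hc1) (exp_frml.mpr hc2)))
  | impR _ ih =>
      intro Δ h
      exact Proves.impR (ih (.semic h (Exp.rfl _)))
  | impL C h1 _ ih1 ih2 =>
      intro Δ h
      obtain ⟨C₀, Γ, rfl, hΓ, hpt⟩ := exp_fill C h
      cases hΓ with
      | semic ha hw =>
        cases ha with
        | semic hA hB =>
          have := collapse_imp (exp_frml.mp hw); subst this
          exact Proves.impL C₀ (ih1 hA) (ih2 (hpt _ _ (.semic hB (Exp.rfl _))))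
  | botL C =>
      intro Δ h
      obtain ⟨C₀, Γ, rfl, hΓ, _⟩ := exp_fill C h
      have := collapse_bot (exp_frml.mp hΓ); subst this
      exact Proves.botL C₀
  | orR1 _ ih => intro Δ h; exact Proves.orR1 (ih h)
  | orR2 _ ih => intro Δ h; exact Proves.orR2 (ih h)
  | orL C _ _ ih1 ih2 =>
      intro Δ h
      obtain ⟨C₀, Γ, rfl, hΓ, hpt⟩ := exp_fill C h
      have := collapse_or (exp_frml.mp hΓ); subst this
      exact Proves.orL C₀ (ih1 (hpt _ _ (Exp.rfl _))) (ih2 (hpt _ _ (Exp.rfl _)))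

lemma mem_clB {X : Set Bunch} {Δ : Bunch} :
    Δ ∈ clB X ↔ ∀ φ : Frml, X ⊆ pr φ → Proves Δ φ := by
  constructor
  · intro h φ hsub; exact h (pr φ) ⟨φ, rfl, hsub⟩
  · rintro h T ⟨φ, rfl, hsub⟩; exact h φ hsub

lemma subset_clB {X : Set Bunch} : X ⊆ clB X := by
  intro Δ hΔ
  rw [mem_clB]; exact fun φ hsub => hsub hΔ

lemma clB_mono {X Y : Set Bunch} (h : X ⊆ Y) : clB X ⊆ clB Y := by
  intro Δ hΔ
  rw [mem_clB] at hΔ ⊢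
  exact fun φ hsub => hΔ φ (h.trans hsub)

lemma key_closed (Y : Set Bunch) (hY : ClosedB Y) (Δ' : Bunch) :
    clB {Γ | Bunch.semic Γ Δ' ∈ Y} ⊆ {Γ | Bunch.semic Γ Δ' ∈ Y} := by
  intro Δ hΔ
  show Bunch.semic Δ Δ' ∈ Y
  rw [← hY, mem_clB]
  intro φ hsub
  have hS : {Γ | Bunch.semic Γ Δ' ∈ Y} ⊆ pr (.imp Δ'.collapse φ) := by
    intro Γ hΓ
    have h1 : Proves (Bunch.semic Γ Δ') φ := hsub hΓ
    have h2 := collapse_left Δ' (.semicR Γ .hole) h1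
    exact Proves.impR h2
  have h3 : Proves Δ (.imp Δ'.collapse φ) := mem_clB.mp hΔ _ hS
  have h4 := impR_inv h3 rfl
  exact exp_proves h4 (.semic (Exp.rfl Δ) (.collapse Δ'))

/-- for closed `X`, `Y`, the set `{Δ | ∀ Δ' ∈ X, Δ ; Δ' ∈ Y}` is
closed and is the Heyting implication `X → Y` in the algebra of closed sets. -/
theorem has_heyting_impl (X Y : Set Bunch) (hX : ClosedB X) (hY : ClosedB Y) :
    ClosedB {Δ | ∀ Δ' ∈ X, Bunch.semic Δ Δ' ∈ Y} ∧
    ∀ Z : Set Bunch, ClosedB Z →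
      (Z ∩ X ⊆ Y ↔ Z ⊆ {Δ | ∀ Δ' ∈ X, Bunch.semic Δ Δ' ∈ Y}) := by
  constructor
  · apply Set.Subset.antisymm
    · intro Δ hΔ Δ' hΔ'
      exact key_closed Y hY Δ' (clB_mono (fun Γ (hΓ : ∀ Δ'' ∈ X, Bunch.semic Γ Δ'' ∈ Y) => hΓ Δ' hΔ') hΔ)
    · exact subset_clB
  · intro Z hZ
    constructor
    · intro hZXY Δ hΔ Δ' hΔ'
      apply hZXY
      constructor
      · rw [← hZ, mem_clB]
        intro φ hsub
        exact Proves.weaken .hole (hsub hΔ)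
      · rw [← hX, mem_clB]
        intro φ hsub
        exact Proves.equiv (Proves.weaken .hole (hsub hΔ')) (.semicComm Δ Δ')
    · rintro hZH Δ ⟨hΔZ, hΔX⟩
      have hsem : Bunch.semic Δ Δ ∈ Y := hZH hΔZ Δ hΔX
      rw [← hY, mem_clB]
      intro φ hsub
      exact Proves.contract .hole (hsub hsem)
end
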